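/- Let w be a word over Ū_H ∪ {t, t⁻¹} in HNN reduced form and let V ⊆ Ū_H be such that w is a word over V ∪ {t, t⁻¹}. Then there is some word v′ over V ∪ {t, t⁻¹} with v′ ∈ MRF(w). -/

import Mathlib

/-- `S` is a free basis of the group `G`: the induced map from the free group
on `S` is an isomorphism. -/
def IsFreeBasis {G : Type*} [Group G] (S : Set G) : Prop :=
  Function.Bijective ⇑(FreeGroup.lift (Subtype.val : S → G))

/-- Letters of words over `Ū_H ∪ {t, t⁻¹}`: an element of the free group `H`
(intended to lie in `Ū_H`), the stable letter `t`, or its inverse. -/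
inductive HLetter (X : Type*) where
  | gen : FreeGroup X → HLetter X
  | t : HLetter X
  | tinv : HLetter X

namespace HnnPaper

variable {X : Type*}

/-- A word `w` is a word over `S ∪ {t, t⁻¹}` if all its group letters lie in `S`. -/
def WordOver (S : Set (FreeGroup X)) (w : List (HLetter X)) : Prop :=
  ∀ l ∈ w, ∀ u : FreeGroup X, l = HLetter.gen u → u ∈ S

/-- A word consisting only of group letters (no `t`, `t⁻¹`). -/
def IsGenOnly (w : List (HLetter X)) : Prop :=
  ∀ l ∈ w, ∃ u : FreeGroup X, l = HLetter.gen u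

/-- The element of `H` represented by a `t`-free word (treats `t`-letters as `1`). -/
def evalH (w : List (HLetter X)) : FreeGroup X :=
  (w.map fun l => match l with
    | HLetter.gen u => u
    | _ => 1).prod

/-- `w` is in HNN reduced form: it has no subword `t⁻¹ w_i t` with `w_i` a `t`-free
word representing an element of `A = ⟨U_A⟩`, and no subword `t w_i t⁻¹` with `w_i`
a `t`-free word representing an element of `B = ⟨U_B⟩`. -/
def HNNReducedWord (UA UB : Set (FreeGroup X)) (w : List (HLetter X)) : Prop :=
  (∀ p mid s, w = p ++ [HLetter.tinv] ++ mid ++ [HLetter.t] ++ s →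
      IsGenOnly mid → evalH mid ∉ Subgroup.closure UA) ∧
  (∀ p mid s, w = p ++ [HLetter.t] ++ mid ++ [HLetter.tinv] ++ s →
      IsGenOnly mid → evalH mid ∉ Subgroup.closure UB)

variable {UA UB : Set (FreeGroup X)}

/-- The element of the HNN extension `H* = H ∗_{t,φ:A→B}` represented by a word. -/
def evalStar (φ : ↥(Subgroup.closure UA) ≃* ↥(Subgroup.closure UB))
    (w : List (HLetter X)) :
    HNNExtension (FreeGroup X) (Subgroup.closure UA) (Subgroup.closure UB) φ :=
  (w.map fun l => match l with
    | HLetter.gen u => HNNExtension.of u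
    | HLetter.t => HNNExtension.t
    | HLetter.tinv => HNNExtension.t⁻¹).prod

/-- Elementary addition: insertion of a pair `u u⁻¹` with `u ∈ Ū_H`. -/
def ElemAdd (UH : Set (FreeGroup X)) (w w' : List (HLetter X)) : Prop :=
  ∃ (p s : List (HLetter X)) (u : FreeGroup X), u ∈ UH ∪ UH⁻¹ ∧ w = p ++ s ∧
    w' = p ++ [HLetter.gen u, HLetter.gen u⁻¹] ++ s

/-- Elementary cancellation: deletion of a pair `u u⁻¹` with `u ∈ Ū_H`. -/
def ElemDel (UH : Set (FreeGroup X)) (w w' : List (HLetter X)) : Prop :=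
  ElemAdd UH w' w

/-- Elementary semicommutation: replacement of `u_a t` by `t u_b`, or of `t⁻¹ u_a`
by `u_b t⁻¹` (or conversely in either case), where `u_a ∈ Ū_A`, `u_b ∈ Ū_B` and
`φ(u_a) = u_b`. -/
def ElemSemi (φ : ↥(Subgroup.closure UA) ≃* ↥(Subgroup.closure UB))
    (w w' : List (HLetter X)) : Prop :=
  ∃ (p s : List (HLetter X)) (a : ↥(Subgroup.closure UA)), (a : FreeGroup X) ∈ UA ∪ UA⁻¹ ∧
    ((w = p ++ [HLetter.gen ↑a, HLetter.t] ++ s ∧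
      w' = p ++ [HLetter.t, HLetter.gen ↑(φ a)] ++ s) ∨
     (w = p ++ [HLetter.t, HLetter.gen ↑(φ a)] ++ s ∧
      w' = p ++ [HLetter.gen ↑a, HLetter.t] ++ s) ∨
     (w = p ++ [HLetter.tinv, HLetter.gen ↑a] ++ s ∧
      w' = p ++ [HLetter.gen ↑(φ a), HLetter.tinv] ++ s) ∨
     (w = p ++ [HLetter.gen ↑(φ a), HLetter.tinv] ++ s ∧
      w' = p ++ [HLetter.tinv, HLetter.gen ↑a] ++ s))

/-- An elementary operation: an elementary addition, cancellation or semicommutation. -/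
def ElemOp (UH : Set (FreeGroup X)) (φ : ↥(Subgroup.closure UA) ≃* ↥(Subgroup.closure UB))
    (w w' : List (HLetter X)) : Prop :=
  ElemAdd UH w w' ∨ ElemDel UH w w' ∨ ElemSemi φ w w'

/-- `w ∼ w'`: a finite sequence of elementary semicommutations turns `w` into `w'`. -/
def Sim (φ : ↥(Subgroup.closure UA) ≃* ↥(Subgroup.closure UB)) :
    List (HLetter X) → List (HLetter X) → Prop :=
  Relation.ReflTransGen (ElemSemi φ)

/-- The word `t^n` (a run of `t`'s or of `t⁻¹`'s). -/
def tPow (n : ℤ) : List (HLetter X) :=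
  if 0 ≤ n then List.replicate n.toNat HLetter.t
  else List.replicate (-n).toNat HLetter.tinv

/-- The word `t^{n₀} u₁ t^{n₁} ⋯ u_k t^{n_k}` determined by `n₀` and the list
`[(u₁,n₁),…,(u_k,n_k)]`. -/
def blockWord (n0 : ℤ) (l : List (FreeGroup X × ℤ)) : List (HLetter X) :=
  tPow n0 ++ l.flatMap (fun p => HLetter.gen p.1 :: tPow p.2)

/-- `w →_m v`: `w ≡ t^{n₀} u₁ t^{n₁} ⋯ u_k t^{n_k}` with `u_{m+1} ≡ u_m⁻¹` and
`n_m = 0`, and `v` is obtained from `w` by the elementary cancellation of the pair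
`u_m u_{m+1}` (so `t^{n_{m-1}}` becomes `t^{n_{m-1}+n_{m+1}}`). -/
def CancelAt (m : ℕ) (w v : List (HLetter X)) : Prop :=
  ∃ (n0 : ℤ) (pre post : List (FreeGroup X × ℤ)) (u : FreeGroup X) (n' : ℤ),
    pre.length + 1 = m ∧
    w = blockWord n0 (pre ++ [(u, 0), (u⁻¹, n')] ++ post) ∧
    ((pre = [] ∧ v = blockWord (n0 + n') post) ∨
     (∃ pre' u' nl, pre = pre' ++ [(u', nl)] ∧
        v = blockWord n0 (pre' ++ [(u', nl + n')] ++ post)))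

/-- `w ⇝_m v`: there are HNN reduced words `w′, v′` with `w ∼ w′ →_m v′ ∼ v`. -/
def RsaAt (φ : ↥(Subgroup.closure UA) ≃* ↥(Subgroup.closure UB)) (m : ℕ)
    (w v : List (HLetter X)) : Prop :=
  ∃ w' v', HNNReducedWord UA UB w' ∧ HNNReducedWord UA UB v' ∧
    Sim φ w w' ∧ CancelAt m w' v' ∧ Sim φ v' v

/-- `w ⇝ v`: `w ⇝_m v` for some `m`. -/
def Rsa (φ : ↥(Subgroup.closure UA) ≃* ↥(Subgroup.closure UB))
    (w v : List (HLetter X)) : Prop :=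
  ∃ m, RsaAt φ m w v

/-- `w ≿ v`: either `w ∼ v` or there is a sequence `w ≡ w₀ ⇝ w₁ ⇝ ⋯ ⇝ w_k ≡ v`
with `k ≥ 1`. -/
def Succsim (φ : ↥(Subgroup.closure UA) ≃* ↥(Subgroup.closure UB))
    (w v : List (HLetter X)) : Prop :=
  Sim φ w v ∨ Relation.TransGen (Rsa φ) w v

/-- `v` is in most reduced form: it is HNN reduced and no `v ⇝ v'` is possible. -/
def MostReduced (φ : ↥(Subgroup.closure UA) ≃* ↥(Subgroup.closure UB))
    (v : List (HLetter X)) : Prop :=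
  HNNReducedWord UA UB v ∧ ∀ v', ¬ Rsa φ v v'

/-- `MRF(w)`: the set of words `v` with `v ≾ w` that are in most reduced form. -/
def MRF (φ : ↥(Subgroup.closure UA) ≃* ↥(Subgroup.closure UB))
    (w : List (HLetter X)) : Set (List (HLetter X)) :=
  {v | Succsim φ w v ∧ MostReduced φ v}

/-- The partial bijection `Ū_A → Ū_B` induced by `φ`, as a relation on `H`. -/
def PhiRel (φ : ↥(Subgroup.closure UA) ≃* ↥(Subgroup.closure UB))
    (u v : FreeGroup X) : Prop :=
  ∃ a : ↥(Subgroup.closure UA), (a : FreeGroup X) ∈ UA ∪ UA⁻¹ ∧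
    (a : FreeGroup X) = u ∧ ((φ a : ↥(Subgroup.closure UB)) : FreeGroup X) = v

/-- `v = φ^n(u)` for `n ∈ ℕ`. -/
def PhiPowN (φ : ↥(Subgroup.closure UA) ≃* ↥(Subgroup.closure UB)) :
    ℕ → FreeGroup X → FreeGroup X → Prop
  | 0 => Eq
  | (n + 1) => fun u v => ∃ w, PhiPowN φ n u w ∧ PhiRel φ w v

/-- `v = φ^z(u)` for `z ∈ ℤ`. -/
def PhiZPow (φ : ↥(Subgroup.closure UA) ≃* ↥(Subgroup.closure UB)) (z : ℤ)
    (u v : FreeGroup X) : Prop :=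
  if 0 ≤ z then PhiPowN φ z.toNat u v else PhiPowN φ (-z).toNat v u

end HnnPaper

open HnnPaper


namespace HnnPaper

section Aux

variable {X : Type*} {UA UB : Set (FreeGroup X)}
variable {φ : ↥(Subgroup.closure UA) ≃* ↥(Subgroup.closure UB)}

/-! ### List overlap lemmas -/

lemma overlap1 {α : Type*} {q r M s : List α} {c d y : α}
    (h : q ++ [c, d] ++ r = M ++ [y] ++ s) :
    (∃ m₂, M = q ++ [c, d] ++ m₂ ∧ r = m₂ ++ [y] ++ s) ∨
    (M = q ++ [c] ∧ d = y ∧ r = s) ∨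
    (q = M ∧ c = y ∧ s = d :: r) ∨
    (∃ s₁, s = s₁ ++ [c, d] ++ r ∧ q = M ++ [y] ++ s₁) := by
  induction q generalizing M with
  | nil =>
    match M with
    | [] => simp_all
    | [m] =>
      simp only [List.nil_append, List.cons_append, List.cons.injEq] at h
      obtain ⟨rfl, rfl, rfl⟩ := h
      right; left; simp
    | (m₁ :: m₂ :: M') =>
      simp only [List.cons_append, List.cons.injEq, List.nil_append] at h
      obtain ⟨rfl, rfl, h⟩ := h
      left; exact ⟨M', by simp, by simp [h]⟩
  | cons a q ih =>
    match M with
    | [] =>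
      simp only [List.cons_append, List.nil_append, List.cons.injEq] at h
      right; right; right; exact ⟨q, by simp [h.2], by simp [h.1]⟩
    | (m :: M') =>
      simp only [List.cons_append, List.cons.injEq] at h
      obtain ⟨rfl, h⟩ := h
      rcases ih (by simpa using h) with ⟨m₂, rfl, hr⟩ | ⟨rfl, rfl, rfl⟩ | ⟨rfl, rfl, rfl⟩ | ⟨s₁, rfl, rfl⟩
      · left; exact ⟨m₂, by simp, hr⟩
      · right; left; simp
      · right; right; left; simp
      · right; right; right; exact ⟨s₁, rfl, by simp⟩

lemma overlap {α : Type*} {q r p mid s : List α} {c d x y : α}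
    (h : q ++ [c, d] ++ r = p ++ [x] ++ mid ++ [y] ++ s) :
    (∃ p₂, p = q ++ [c, d] ++ p₂ ∧ r = p₂ ++ [x] ++ mid ++ [y] ++ s) ∨
    (p = q ++ [c] ∧ d = x ∧ r = mid ++ [y] ++ s) ∨
    (q = p ∧ c = x ∧ ∃ m₂, mid = d :: m₂ ∧ r = m₂ ++ [y] ++ s) ∨
    (q = p ∧ c = x ∧ mid = [] ∧ d = y ∧ r = s) ∨
    (∃ m₁ m₂, mid = m₁ ++ [c, d] ++ m₂ ∧ q = p ++ [x] ++ m₁ ∧ r = m₂ ++ [y] ++ s) ∨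
    (∃ m₁, mid = m₁ ++ [c] ∧ q = p ++ [x] ++ m₁ ∧ d = y ∧ r = s) ∨
    (q = p ++ [x] ++ mid ∧ c = y ∧ s = d :: r) ∨
    (∃ s₁, s = s₁ ++ [c, d] ++ r ∧ q = p ++ [x] ++ mid ++ [y] ++ s₁) := by
  have h' : q ++ [c, d] ++ r = (p ++ [x] ++ mid) ++ [y] ++ s := by
    simpa [List.append_assoc] using h
  rcases overlap1 h' with ⟨m₂, hM, hr⟩ | ⟨hM, rfl, rfl⟩ | ⟨rfl, rfl, rfl⟩ | ⟨s₁, rfl, rfl⟩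
  · have h2 : q ++ [c, d] ++ m₂ = p ++ [x] ++ mid := hM.symm
    rcases overlap1 h2 with ⟨p₂, hp, hm⟩ | ⟨hp, rfl, rfl⟩ | ⟨rfl, rfl, rfl⟩ | ⟨m₁, rfl, rfl⟩
    · exact Or.inl ⟨p₂, hp, by simp [hr, hm, List.append_assoc]⟩
    · exact Or.inr (Or.inl ⟨hp, rfl, hr⟩)
    · exact Or.inr (Or.inr (Or.inl ⟨rfl, rfl, m₂, rfl, hr⟩))
    · exact Or.inr (Or.inr (Or.inr (Or.inr (Or.inl ⟨m₁, m₂, rfl, rfl, hr⟩))))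
  · rcases mid.eq_nil_or_concat with rfl | ⟨m₁, c', rfl⟩
    · have := (by simpa using hM : p = q ∧ x = c)
      exact Or.inr (Or.inr (Or.inr (Or.inl ⟨this.1.symm, by simpa using this.2.symm, rfl, rfl, rfl⟩)))
    · have h3 : (p ++ [x] ++ m₁) ++ [c'] = q ++ [c] := by simpa [List.append_assoc] using hM
      have := List.append_inj' h3 (by simp)
      refine Or.inr (Or.inr (Or.inr (Or.inr (Or.inr (Or.inl ⟨m₁, ?_, this.1.symm, rfl, rfl⟩)))))
      simp [show c' = c by simpa using this.2]
  · exact Or.inr (Or.inr (Or.inr (Or.inr (Or.inr (Or.inr (Or.inl ⟨rfl, rfl, rfl⟩))))))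
  · exact Or.inr (Or.inr (Or.inr (Or.inr (Or.inr (Or.inr (Or.inr ⟨s₁, rfl, by simp [List.append_assoc]⟩))))))

/-! ### `evalH` and `IsGenOnly` basics -/

@[simp] lemma evalH_nil : evalH ([] : List (HLetter X)) = 1 := rfl

@[simp] lemma evalH_cons_gen (u : FreeGroup X) (w : List (HLetter X)) :
    evalH (HLetter.gen u :: w) = u * evalH w := by simp [evalH]

@[simp] lemma evalH_cons_t (w : List (HLetter X)) :
    evalH (HLetter.t :: w) = evalH w := by simp [evalH]

@[simp] lemma evalH_cons_tinv (w : List (HLetter X)) :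
    evalH (HLetter.tinv :: w) = evalH w := by simp [evalH]

@[simp] lemma evalH_append (xs ys : List (HLetter X)) :
    evalH (xs ++ ys) = evalH xs * evalH ys := by simp [evalH]

lemma IsGenOnly.append {xs ys : List (HLetter X)} (h1 : IsGenOnly xs) (h2 : IsGenOnly ys) :
    IsGenOnly (xs ++ ys) := by
  intro l hl
  rcases List.mem_append.mp hl with h | h
  · exact h1 l h
  · exact h2 l h

lemma isGenOnly_single (u : FreeGroup X) : IsGenOnly [HLetter.gen u] := by
  intro l hl; simp at hl; exact ⟨u, hl⟩

lemma IsGenOnly.cons_gen {xs : List (HLetter X)} (u : FreeGroup X) (h : IsGenOnly xs) :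
    IsGenOnly (HLetter.gen u :: xs) := by
  intro l hl
  rcases List.mem_cons.mp hl with rfl | hl
  · exact ⟨u, rfl⟩
  · exact h l hl

lemma not_genOnly_t {mid : List (HLetter X)} (h : IsGenOnly mid) (hm : HLetter.t ∈ mid) :
    False := by
  obtain ⟨u, hu⟩ := h _ hm; simp at hu

lemma not_genOnly_tinv {mid : List (HLetter X)} (h : IsGenOnly mid) (hm : HLetter.tinv ∈ mid) :
    False := by
  obtain ⟨u, hu⟩ := h _ hm; simp at hu

/-! ### `ElemSemi` preserves HNN reducedness -/

lemma elemSemi_reduced {w w' : List (HLetter X)} (h : ElemSemi φ w w')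
    (hw : HNNReducedWord UA UB w) : HNNReducedWord UA UB w' := by
  obtain ⟨q, r, a, -, hc⟩ := h
  have haA : (a : FreeGroup X) ∈ Subgroup.closure UA := a.2
  have hbB : ((φ a : ↥(Subgroup.closure UB)) : FreeGroup X) ∈ Subgroup.closure UB := (φ a).2
  rcases hc with ⟨rfl, rfl⟩ | ⟨rfl, rfl⟩ | ⟨rfl, rfl⟩ | ⟨rfl, rfl⟩
  -- Case A : w = q ++ [gen a, t] ++ r, w' = q ++ [t, gen φa] ++ r
  · constructor
    · intro p mid s hdec hgen
      rcases overlap hdec with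
          ⟨p₂, rfl, rfl⟩ | ⟨hp, hdx, hr⟩ | ⟨rfl, hcx, m₂, hm, hr⟩ | ⟨rfl, hcx, rfl, hdy, rfl⟩ |
          ⟨m₁, m₂, hm, rfl, hr⟩ | ⟨m₁, hm, rfl, hdy, rfl⟩ | ⟨rfl, hcy, rfl⟩ | ⟨s₁, rfl, rfl⟩
      · exact hw.1 (q ++ [HLetter.gen ↑a, HLetter.t] ++ p₂) mid s (by simp) hgen
      · simp at hdx
      · simp at hcx
      · simp at hcx
      · exact absurd (by rw [hm]; simp : HLetter.t ∈ mid) (fun hh => not_genOnly_t hgen hh)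
      · exact absurd (by rw [hm]; simp : HLetter.t ∈ mid) (fun hh => not_genOnly_t hgen hh)
      · have := hw.1 p (mid ++ [HLetter.gen ↑a]) r (by simp)
          (hgen.append (isGenOnly_single _))
        exact fun hmem => this (by simpa using mul_mem hmem haA)
      · exact hw.1 p mid (s₁ ++ [HLetter.gen ↑a, HLetter.t] ++ r) (by simp) hgen
    · intro p mid s hdec hgen
      rcases overlap hdec with
          ⟨p₂, rfl, rfl⟩ | ⟨hp, hdx, hr⟩ | ⟨rfl, hcx, m₂, rfl, rfl⟩ | ⟨rfl, hcx, rfl, hdy, rfl⟩ |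
          ⟨m₁, m₂, hm, rfl, hr⟩ | ⟨m₁, hm, rfl, hdy, rfl⟩ | ⟨rfl, hcy, rfl⟩ | ⟨s₁, rfl, rfl⟩
      · exact hw.2 (q ++ [HLetter.gen ↑a, HLetter.t] ++ p₂) mid s (by simp) hgen
      · simp at hdx
      · have := hw.2 (q ++ [HLetter.gen ↑a]) m₂ s (by simp)
          (fun l hl => hgen l (by simp [hl]))
        exact fun hmem => this ((Subgroup.mul_mem_cancel_left _ hbB).mp (by simpa using hmem))
      · simp at hdy
      · exact absurd (by rw [hm]; simp : HLetter.t ∈ mid) (fun hh => not_genOnly_t hgen hh)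
      · exact absurd (by rw [hm]; simp : HLetter.t ∈ mid) (fun hh => not_genOnly_t hgen hh)
      · simp at hcy
      · exact hw.2 p mid (s₁ ++ [HLetter.gen ↑a, HLetter.t] ++ r) (by simp) hgen
  -- Case B : w = q ++ [t, gen φa] ++ r, w' = q ++ [gen a, t] ++ r
  · constructor
    · intro p mid s hdec hgen
      rcases overlap hdec with
          ⟨p₂, rfl, rfl⟩ | ⟨hp, hdx, hr⟩ | ⟨rfl, hcx, m₂, hm, hr⟩ | ⟨rfl, hcx, rfl, hdy, rfl⟩ |
          ⟨m₁, m₂, hm, rfl, hr⟩ | ⟨m₁, rfl, rfl, hdy, rfl⟩ | ⟨rfl, hcy, rfl⟩ | ⟨s₁, rfl, rfl⟩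
      · exact hw.1 (q ++ [HLetter.t, HLetter.gen ↑(φ a)] ++ p₂) mid s (by simp) hgen
      · simp at hdx
      · simp at hcx
      · simp at hcx
      · exact absurd (by rw [hm]; simp : HLetter.t ∈ mid) (fun hh => not_genOnly_t hgen hh)
      · have := hw.1 p m₁ ([HLetter.gen ↑(φ a)] ++ r) (by simp)
          (fun l hl => hgen l (by simp [hl]))
        exact fun hmem => this ((Subgroup.mul_mem_cancel_right _ haA).mp (by simpa using hmem))
      · simp at hcy
      · exact hw.1 p mid (s₁ ++ [HLetter.t, HLetter.gen ↑(φ a)] ++ r) (by simp) hgen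
    · intro p mid s hdec hgen
      rcases overlap hdec with
          ⟨p₂, rfl, rfl⟩ | ⟨rfl, hdx, rfl⟩ | ⟨rfl, hcx, m₂, hm, hr⟩ | ⟨rfl, hcx, rfl, hdy, rfl⟩ |
          ⟨m₁, m₂, hm, rfl, hr⟩ | ⟨m₁, hm, rfl, hdy, rfl⟩ | ⟨rfl, hcy, rfl⟩ | ⟨s₁, rfl, rfl⟩
      · exact hw.2 (q ++ [HLetter.t, HLetter.gen ↑(φ a)] ++ p₂) mid s (by simp) hgen
      · have := hw.2 q (HLetter.gen ↑(φ a) :: mid) s (by simp) (hgen.cons_gen _)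
        exact fun hmem => this (by simpa using mul_mem hbB hmem)
      · simp at hcx
      · simp at hcx
      · exact absurd (by rw [hm]; simp : HLetter.t ∈ mid) (fun hh => not_genOnly_t hgen hh)
      · simp at hdy
      · simp at hcy
      · exact hw.2 p mid (s₁ ++ [HLetter.t, HLetter.gen ↑(φ a)] ++ r) (by simp) hgen
  -- Case C : w = q ++ [tinv, gen a] ++ r, w' = q ++ [gen φa, tinv] ++ r
  · constructor
    · intro p mid s hdec hgen
      rcases overlap hdec with
          ⟨p₂, rfl, rfl⟩ | ⟨rfl, hdx, rfl⟩ | ⟨rfl, hcx, m₂, hm, hr⟩ | ⟨rfl, hcx, rfl, hdy, rfl⟩ |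
          ⟨m₁, m₂, hm, rfl, hr⟩ | ⟨m₁, hm, rfl, hdy, rfl⟩ | ⟨rfl, hcy, rfl⟩ | ⟨s₁, rfl, rfl⟩
      · exact hw.1 (q ++ [HLetter.tinv, HLetter.gen ↑a] ++ p₂) mid s (by simp) hgen
      · have := hw.1 q (HLetter.gen ↑a :: mid) s (by simp) (hgen.cons_gen _)
        exact fun hmem => this (by simpa using mul_mem haA hmem)
      · simp at hcx
      · simp at hcx
      · exact absurd (by rw [hm]; simp : HLetter.tinv ∈ mid) (fun hh => not_genOnly_tinv hgen hh)
      · simp at hdy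
      · simp at hcy
      · exact hw.1 p mid (s₁ ++ [HLetter.tinv, HLetter.gen ↑a] ++ r) (by simp) hgen
    · intro p mid s hdec hgen
      rcases overlap hdec with
          ⟨p₂, rfl, rfl⟩ | ⟨hp, hdx, hr⟩ | ⟨rfl, hcx, m₂, hm, hr⟩ | ⟨rfl, hcx, rfl, hdy, rfl⟩ |
          ⟨m₁, m₂, hm, rfl, hr⟩ | ⟨m₁, rfl, rfl, hdy, rfl⟩ | ⟨rfl, hcy, rfl⟩ | ⟨s₁, rfl, rfl⟩
      · exact hw.2 (q ++ [HLetter.tinv, HLetter.gen ↑a] ++ p₂) mid s (by simp) hgen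
      · simp at hdx
      · simp at hcx
      · simp at hcx
      · exact absurd (by rw [hm]; simp : HLetter.tinv ∈ mid) (fun hh => not_genOnly_tinv hgen hh)
      · have := hw.2 p m₁ ([HLetter.gen ↑a] ++ r) (by simp)
          (fun l hl => hgen l (by simp [hl]))
        exact fun hmem => this ((Subgroup.mul_mem_cancel_right _ hbB).mp (by simpa using hmem))
      · simp at hcy
      · exact hw.2 p mid (s₁ ++ [HLetter.tinv, HLetter.gen ↑a] ++ r) (by simp) hgen
  -- Case D : w = q ++ [gen φa, tinv] ++ r, w' = q ++ [tinv, gen a] ++ r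
  · constructor
    · intro p mid s hdec hgen
      rcases overlap hdec with
          ⟨p₂, rfl, rfl⟩ | ⟨hp, hdx, hr⟩ | ⟨rfl, hcx, m₂, rfl, rfl⟩ | ⟨rfl, hcx, rfl, hdy, rfl⟩ |
          ⟨m₁, m₂, hm, rfl, hr⟩ | ⟨m₁, hm, rfl, hdy, rfl⟩ | ⟨rfl, hcy, rfl⟩ | ⟨s₁, rfl, rfl⟩
      · exact hw.1 (q ++ [HLetter.gen ↑(φ a), HLetter.tinv] ++ p₂) mid s (by simp) hgen
      · simp at hdx
      · have := hw.1 (q ++ [HLetter.gen ↑(φ a)]) m₂ s (by simp)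
          (fun l hl => hgen l (by simp [hl]))
        exact fun hmem => this ((Subgroup.mul_mem_cancel_left _ haA).mp (by simpa using hmem))
      · simp at hdy
      · exact absurd (by rw [hm]; simp : HLetter.tinv ∈ mid) (fun hh => not_genOnly_tinv hgen hh)
      · exact absurd (by rw [hm]; simp : HLetter.tinv ∈ mid) (fun hh => not_genOnly_tinv hgen hh)
      · simp at hcy
      · exact hw.1 p mid (s₁ ++ [HLetter.gen ↑(φ a), HLetter.tinv] ++ r) (by simp) hgen
    · intro p mid s hdec hgen
      rcases overlap hdec with
          ⟨p₂, rfl, rfl⟩ | ⟨hp, hdx, hr⟩ | ⟨rfl, hcx, m₂, hm, hr⟩ | ⟨rfl, hcx, rfl, hdy, rfl⟩ |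
          ⟨m₁, m₂, hm, rfl, hr⟩ | ⟨m₁, hm, rfl, hdy, rfl⟩ | ⟨rfl, hcy, rfl⟩ | ⟨s₁, rfl, rfl⟩
      · exact hw.2 (q ++ [HLetter.gen ↑(φ a), HLetter.tinv] ++ p₂) mid s (by simp) hgen
      · simp at hdx
      · simp at hcx
      · simp at hcx
      · exact absurd (by rw [hm]; simp : HLetter.tinv ∈ mid) (fun hh => not_genOnly_tinv hgen hh)
      · exact absurd (by rw [hm]; simp : HLetter.tinv ∈ mid) (fun hh => not_genOnly_tinv hgen hh)
      · have := hw.2 p (mid ++ [HLetter.gen ↑(φ a)]) r (by simp)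
          (hgen.append (isGenOnly_single _))
        exact fun hmem => this (by simpa using mul_mem hmem hbB)
      · exact hw.2 p mid (s₁ ++ [HLetter.gen ↑(φ a), HLetter.tinv] ++ r) (by simp) hgen
  end Aux

end HnnPaper

namespace HnnPaper

section Aux2

variable {X : Type*} {UA UB : Set (FreeGroup X)}
variable {φ : ↥(Subgroup.closure UA) ≃* ↥(Subgroup.closure UB)}

/-! ### Counting generator letters -/

def genCount (w : List (HLetter X)) : ℕ :=
  w.countP fun l => match l with | HLetter.gen _ => true | _ => false

@[simp] lemma genCount_nil : genCount ([] : List (HLetter X)) = 0 := rfl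

@[simp] lemma genCount_cons_gen (u : FreeGroup X) (w : List (HLetter X)) :
    genCount (HLetter.gen u :: w) = genCount w + 1 := by
  simp [genCount, List.countP_cons]

@[simp] lemma genCount_cons_t (w : List (HLetter X)) :
    genCount (HLetter.t :: w) = genCount w := by
  simp [genCount, List.countP_cons]

@[simp] lemma genCount_cons_tinv (w : List (HLetter X)) :
    genCount (HLetter.tinv :: w) = genCount w := by
  simp [genCount, List.countP_cons]

@[simp] lemma genCount_append (xs ys : List (HLetter X)) :
    genCount (xs ++ ys) = genCount xs + genCount ys := by
  simp [genCount, List.countP_append]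

@[simp] lemma genCount_replicate_t (n : ℕ) :
    genCount (List.replicate n (HLetter.t : HLetter X)) = 0 := by
  induction n with
  | zero => rfl
  | succ n ih => simpa [List.replicate_succ] using ih

@[simp] lemma genCount_replicate_tinv (n : ℕ) :
    genCount (List.replicate n (HLetter.tinv : HLetter X)) = 0 := by
  induction n with
  | zero => rfl
  | succ n ih => simpa [List.replicate_succ] using ih

@[simp] lemma genCount_tPow (n : ℤ) : genCount (tPow (X := X) n) = 0 := by
  unfold tPow; split <;> simp

lemma elemSemi_genCount {w w' : List (HLetter X)} (h : ElemSemi φ w w') :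
    genCount w = genCount w' := by
  obtain ⟨q, r, a, -, hc⟩ := h
  rcases hc with ⟨rfl, rfl⟩ | ⟨rfl, rfl⟩ | ⟨rfl, rfl⟩ | ⟨rfl, rfl⟩ <;> simp

lemma sim_genCount {w w' : List (HLetter X)} (h : Sim φ w w') :
    genCount w = genCount w' := by
  induction h with
  | refl => rfl
  | tail _ hstep ih => exact ih.trans (elemSemi_genCount hstep)

/-! ### Deleting a pair of generator letters -/

def delAux (m : ℕ) : ℕ → List (HLetter X) → List (HLetter X)
  | _, [] => []
  | k, (HLetter.gen u :: rest) =>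
      (if k = m ∨ k = m + 1 then [] else [HLetter.gen u]) ++ delAux m (k + 1) rest
  | k, (HLetter.t :: rest) => HLetter.t :: delAux m k rest
  | k, (HLetter.tinv :: rest) => HLetter.tinv :: delAux m k rest

@[simp] lemma delAux_nil (m k : ℕ) : delAux (X := X) m k [] = [] := rfl

@[simp] lemma delAux_cons_gen (m k : ℕ) (u : FreeGroup X) (w : List (HLetter X)) :
    delAux m k (HLetter.gen u :: w) =
      (if k = m ∨ k = m + 1 then [] else [HLetter.gen u]) ++ delAux m (k + 1) w := rfl

@[simp] lemma delAux_cons_t (m k : ℕ) (w : List (HLetter X)) :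
    delAux m k (HLetter.t :: w) = HLetter.t :: delAux m k w := rfl

@[simp] lemma delAux_cons_tinv (m k : ℕ) (w : List (HLetter X)) :
    delAux m k (HLetter.tinv :: w) = HLetter.tinv :: delAux m k w := rfl

lemma delAux_append (m : ℕ) (xs : List (HLetter X)) :
    ∀ (k : ℕ) (ys : List (HLetter X)),
      delAux m k (xs ++ ys) = delAux m k xs ++ delAux m (k + genCount xs) ys := by
  induction xs with
  | nil => simp
  | cons a xs ih =>
    intro k ys
    cases a with
    | gen u =>
      simp only [List.cons_append, delAux_cons_gen, genCount_cons_gen, ih]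
      rw [show k + (genCount xs + 1) = k + 1 + genCount xs by omega]
      simp [List.append_assoc]
    | t => simp [ih, List.cons_append]
    | tinv => simp [ih, List.cons_append]

lemma delAux_mem {m k : ℕ} {w : List (HLetter X)} {l : HLetter X}
    (h : l ∈ delAux m k w) : l ∈ w := by
  induction w generalizing k with
  | nil => simpa using h
  | cons a w ih =>
    cases a with
    | gen u =>
      simp only [delAux_cons_gen, List.mem_append] at h
      rcases h with h | h
      · split at h <;> simp_all
      · exact List.mem_cons_of_mem _ (ih h)
    | t =>
      rcases List.mem_cons.mp h with rfl | h
      · simp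
      · exact List.mem_cons_of_mem _ (ih h)
    | tinv =>
      rcases List.mem_cons.mp h with rfl | h
      · simp
      · exact List.mem_cons_of_mem _ (ih h)

lemma wordOver_delAux {V : Set (FreeGroup X)} {w : List (HLetter X)} (h : WordOver V w)
    (m k : ℕ) : WordOver V (delAux m k w) :=
  fun l hl => h l (delAux_mem hl)

lemma delAux_replicate_t (m k n : ℕ) :
    delAux (X := X) m k (List.replicate n HLetter.t) = List.replicate n HLetter.t := by
  induction n with
  | zero => rfl
  | succ n ih => simp [List.replicate_succ, ih]

lemma delAux_replicate_tinv (m k n : ℕ) :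
    delAux (X := X) m k (List.replicate n HLetter.tinv) = List.replicate n HLetter.tinv := by
  induction n with
  | zero => rfl
  | succ n ih => simp [List.replicate_succ, ih]

@[simp] lemma delAux_tPow (m k : ℕ) (n : ℤ) :
    delAux (X := X) m k (tPow n) = tPow n := by
  unfold tPow; split
  · exact delAux_replicate_t m k _
  · exact delAux_replicate_tinv m k _

/-! ### `delAux` and semicommutation -/

lemma delAux_middle (m : ℕ) (q mid r : List (HLetter X)) :
    delAux m 0 (q ++ mid ++ r) =
      delAux m 0 q ++ delAux m (genCount q) mid ++
        delAux m (genCount q + genCount mid) r := by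
  rw [delAux_append, delAux_append]
  simp [List.append_assoc]

lemma elemSemi_delAux {w w' : List (HLetter X)} (h : ElemSemi φ w w') (m : ℕ) :
    Sim φ (delAux m 0 w) (delAux m 0 w') := by
  obtain ⟨q, r, a, ha, hc⟩ := h
  rcases hc with ⟨rfl, rfl⟩ | ⟨rfl, rfl⟩ | ⟨rfl, rfl⟩ | ⟨rfl, rfl⟩ <;>
    rw [delAux_middle, delAux_middle] <;>
    by_cases hgq : genCount q = m ∨ genCount q = m + 1
  · simp only [delAux_cons_gen, delAux_cons_t, hgq, if_pos, delAux_nil]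
    simp only [List.nil_append, List.singleton_append, genCount_cons_gen, genCount_cons_t,
      genCount_cons_tinv, genCount_nil, List.append_assoc]
    exact Relation.ReflTransGen.refl
  · apply Relation.ReflTransGen.single
    exact ⟨delAux m 0 q, delAux m (genCount q + 1) r, a, ha, Or.inl
      ⟨by simp [hgq], by simp [hgq]⟩⟩
  · simp only [delAux_cons_gen, delAux_cons_t, hgq, if_pos, delAux_nil]
    simp only [List.nil_append, List.singleton_append, genCount_cons_gen, genCount_cons_t,
      genCount_cons_tinv, genCount_nil, List.append_assoc]
    exact Relation.ReflTransGen.refl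
  · apply Relation.ReflTransGen.single
    exact ⟨delAux m 0 q, delAux m (genCount q + 1) r, a, ha, Or.inr (Or.inl
      ⟨by simp [hgq], by simp [hgq]⟩)⟩
  · simp only [delAux_cons_gen, delAux_cons_tinv, hgq, if_pos, delAux_nil]
    simp only [List.nil_append, List.singleton_append, genCount_cons_gen, genCount_cons_t,
      genCount_cons_tinv, genCount_nil, List.append_assoc]
    exact Relation.ReflTransGen.refl
  · apply Relation.ReflTransGen.single
    exact ⟨delAux m 0 q, delAux m (genCount q + 1) r, a, ha, Or.inr (Or.inr (Or.inl
      ⟨by simp [hgq], by simp [hgq]⟩))⟩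
  · simp only [delAux_cons_gen, delAux_cons_tinv, hgq, if_pos, delAux_nil]
    simp only [List.nil_append, List.singleton_append, genCount_cons_gen, genCount_cons_t,
      genCount_cons_tinv, genCount_nil, List.append_assoc]
    exact Relation.ReflTransGen.refl
  · apply Relation.ReflTransGen.single
    exact ⟨delAux m 0 q, delAux m (genCount q + 1) r, a, ha, Or.inr (Or.inr (Or.inr
      ⟨by simp [hgq], by simp [hgq]⟩))⟩

lemma sim_delAux {w w' : List (HLetter X)} (h : Sim φ w w') (m : ℕ) :
    Sim φ (delAux m 0 w) (delAux m 0 w') := by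
  induction h with
  | refl => exact Relation.ReflTransGen.refl
  | tail _ hstep ih => exact ih.trans (elemSemi_delAux hstep m)

lemma elemSemi_symm {w w' : List (HLetter X)} (h : ElemSemi φ w w') : ElemSemi φ w' w := by
  obtain ⟨q, r, a, ha, hc⟩ := h
  exact ⟨q, r, a, ha, by tauto⟩

lemma sim_symm {w w' : List (HLetter X)} (h : Sim φ w w') : Sim φ w' w :=
  by
    induction h with
    | refl => exact Relation.ReflTransGen.refl
    | tail _ hstep ih => exact Relation.ReflTransGen.head (elemSemi_symm hstep) ih

lemma sim_reduced {w w' : List (HLetter X)} (h : Sim φ w w')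
    (hw : HNNReducedWord UA UB w) : HNNReducedWord UA UB w' := by
  induction h with
  | refl => exact hw
  | tail _ hstep ih => exact elemSemi_reduced hstep ih

end Aux2

end HnnPaper

namespace HnnPaper

section Aux3

variable {X : Type*} {UA UB : Set (FreeGroup X)}
variable {φ : ↥(Subgroup.closure UA) ≃* ↥(Subgroup.closure UB)}

/-! ### `tPow` and `blockWord` -/

@[simp] lemma tPow_zero : tPow (X := X) 0 = [] := by simp [tPow]

lemma tPow_nonneg {n : ℤ} (h : 0 ≤ n) :
    tPow (X := X) n = List.replicate n.toNat HLetter.t := if_pos h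

lemma tPow_nonpos {n : ℤ} (h : n ≤ 0) :
    tPow (X := X) n = List.replicate (-n).toNat HLetter.tinv := by
  unfold tPow; split
  · have hn : n = 0 := le_antisymm h (by assumption)
    subst hn; simp
  · rfl

lemma tPow_append {a b : ℤ} (h : (0 ≤ a ∧ 0 ≤ b) ∨ (a ≤ 0 ∧ b ≤ 0)) :
    tPow (X := X) a ++ tPow b = tPow (a + b) := by
  rcases h with ⟨ha, hb⟩ | ⟨ha, hb⟩
  · rw [tPow_nonneg ha, tPow_nonneg hb, tPow_nonneg (by omega), ← List.replicate_add]
    congr 1; omega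
  · rw [tPow_nonpos ha, tPow_nonpos hb, tPow_nonpos (by omega), ← List.replicate_add]
    congr 1; omega

lemma blockWord_eq (n0 : ℤ) (l : List (FreeGroup X × ℤ)) :
    blockWord n0 l = tPow n0 ++ l.flatMap (fun p => HLetter.gen p.1 :: tPow p.2) := rfl

@[simp] lemma genCount_flatMapBlocks (l : List (FreeGroup X × ℤ)) :
    genCount (l.flatMap fun p => HLetter.gen p.1 :: tPow p.2) = l.length := by
  induction l with
  | nil => simp
  | cons p l ih => simp [ih]

@[simp] lemma genCount_blockWord (n0 : ℤ) (l : List (FreeGroup X × ℤ)) :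
    genCount (blockWord n0 l) = l.length := by
  simp [blockWord_eq]

/-! ### The sign lemma -/

lemma isGenOnly_pair (u v : FreeGroup X) : IsGenOnly [HLetter.gen u, HLetter.gen v] := by
  intro l hl
  rcases List.mem_cons.mp hl with rfl | hl
  · exact ⟨u, rfl⟩
  · simp at hl; exact ⟨v, hl⟩

lemma reduced_signs {W₁ W₂ : List (HLetter X)} {nl n' : ℤ} {u : FreeGroup X}
    (hred : HNNReducedWord UA UB
      (W₁ ++ tPow nl ++ [HLetter.gen u, HLetter.gen u⁻¹] ++ tPow n' ++ W₂)) :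
    (0 ≤ nl ∧ 0 ≤ n') ∨ (nl ≤ 0 ∧ n' ≤ 0) := by
  have hev : evalH [HLetter.gen u, HLetter.gen u⁻¹] = 1 := by simp
  rcases le_or_gt 0 nl with h1 | h1 <;> rcases le_or_gt 0 n' with h2 | h2
  · exact Or.inl ⟨h1, h2⟩
  · rcases eq_or_lt_of_le h1 with h1' | h1'
    · exact Or.inr ⟨le_of_eq h1'.symm, le_of_lt h2⟩
    · exfalso
      obtain ⟨j, hj⟩ : ∃ j, nl.toNat = j + 1 := ⟨nl.toNat - 1, by omega⟩
      obtain ⟨j', hj'⟩ : ∃ j', (-n').toNat = j' + 1 := ⟨(-n').toNat - 1, by omega⟩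
      refine hred.2 (W₁ ++ List.replicate j HLetter.t) [HLetter.gen u, HLetter.gen u⁻¹]
        (List.replicate j' HLetter.tinv ++ W₂) ?_ (isGenOnly_pair _ _) ?_
      · rw [tPow_nonneg (le_of_lt h1'), tPow_nonpos (le_of_lt h2), hj, hj',
          List.replicate_succ', List.replicate_succ]
        simp [List.append_assoc]
      · rw [hev]; exact one_mem _
  · rcases eq_or_lt_of_le h2 with h2' | h2'
    · exact Or.inr ⟨le_of_lt h1, le_of_eq h2'.symm⟩
    · exfalso
      obtain ⟨j, hj⟩ : ∃ j, (-nl).toNat = j + 1 := ⟨(-nl).toNat - 1, by omega⟩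
      obtain ⟨j', hj'⟩ : ∃ j', n'.toNat = j' + 1 := ⟨n'.toNat - 1, by omega⟩
      refine hred.1 (W₁ ++ List.replicate j HLetter.tinv) [HLetter.gen u, HLetter.gen u⁻¹]
        (List.replicate j' HLetter.t ++ W₂) ?_ (isGenOnly_pair _ _) ?_
      · rw [tPow_nonpos (le_of_lt h1), tPow_nonneg (le_of_lt h2'), hj, hj',
          List.replicate_succ', List.replicate_succ]
        simp [List.append_assoc]
      · rw [hev]; exact one_mem _
  · exact Or.inr ⟨le_of_lt h1, le_of_lt h2⟩

/-! ### Computing `delAux` on a block word -/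

lemma delAux_of_ge {m : ℕ} (w : List (HLetter X)) :
    ∀ k, m + 2 ≤ k → delAux m k w = w := by
  induction w with
  | nil => simp
  | cons a w ih =>
    intro k hk
    cases a with
    | gen u =>
      rw [delAux_cons_gen, if_neg (by omega), ih (k + 1) (by omega)]
      simp
    | t => rw [delAux_cons_t, ih k hk]
    | tinv => rw [delAux_cons_tinv, ih k hk]

lemma del_core (u : FreeGroup X) (n' : ℤ) (post : List (FreeGroup X × ℤ)) :
    ∀ (pre : List (FreeGroup X × ℤ)) (k : ℕ),
      delAux (k + pre.length) k
        ((pre ++ [(u, 0), (u⁻¹, n')] ++ post).flatMap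
          fun p => HLetter.gen p.1 :: tPow p.2) =
      (pre.flatMap fun p => HLetter.gen p.1 :: tPow p.2) ++ tPow n'
        ++ (post.flatMap fun p => HLetter.gen p.1 :: tPow p.2) := by
  intro pre
  induction pre with
  | nil =>
    intro k
    have hh : ((([] : List (FreeGroup X × ℤ)) ++ [(u, 0), (u⁻¹, n')] ++ post).flatMap
        fun p => HLetter.gen p.1 :: tPow p.2)
        = HLetter.gen u :: (HLetter.gen u⁻¹ ::
            (tPow n' ++ post.flatMap fun p => HLetter.gen p.1 :: tPow p.2)) := by
      simp
    rw [hh, List.length_nil, Nat.add_zero, delAux_cons_gen, if_pos (Or.inl rfl),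
      List.nil_append, delAux_cons_gen, if_pos (Or.inr rfl), List.nil_append,
      delAux_append, delAux_tPow, delAux_of_ge _ _ (by omega)]
    simp
  | cons p pre ih =>
    intro k
    simp only [List.cons_append, List.flatMap_cons, List.length_cons]
    rw [delAux_cons_gen, if_neg (by omega), delAux_append, delAux_tPow,
      show k + 1 + genCount (tPow p.2) = k + 1 by simp,
      show k + (pre.length + 1) = k + 1 + pre.length by omega, ih (k + 1)]
    simp [List.append_assoc]

lemma delAux_blockWord (n0 n' : ℤ) (pre post : List (FreeGroup X × ℤ)) (u : FreeGroup X) :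
    delAux pre.length 0 (blockWord n0 (pre ++ [(u, 0), (u⁻¹, n')] ++ post)) =
      tPow n0 ++ (pre.flatMap fun p => HLetter.gen p.1 :: tPow p.2) ++ tPow n'
        ++ (post.flatMap fun p => HLetter.gen p.1 :: tPow p.2) := by
  rw [blockWord_eq, delAux_append, delAux_tPow]
  have := del_core u n' post pre 0
  simp only [Nat.zero_add] at this
  rw [show (0 : ℕ) + genCount (tPow n0) = 0 by simp, this]
  simp [List.append_assoc]

/-! ### Composition lemmas for `Rsa` -/

lemma rsa_sim_left {x w v : List (HLetter X)} (hs : Sim φ x w) (h : Rsa φ w v) :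
    Rsa φ x v := by
  obtain ⟨m, w', v', h1, h2, h3, h4, h5⟩ := h
  exact ⟨m, w', v', h1, h2, hs.trans h3, h4, h5⟩

lemma rsa_sim_right {w v y : List (HLetter X)} (h : Rsa φ w v) (hs : Sim φ v y) :
    Rsa φ w y := by
  obtain ⟨m, w', v', h1, h2, h3, h4, h5⟩ := h
  exact ⟨m, w', v', h1, h2, h3, h4, h5.trans hs⟩

end Aux3

end HnnPaper

namespace HnnPaper

section Aux4

variable {X : Type*} {UA UB : Set (FreeGroup X)}

lemma main_aux (φ : ↥(Subgroup.closure UA) ≃* ↥(Subgroup.closure UB))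
    (V : Set (FreeGroup X)) :
    ∀ (n : ℕ) (w : List (HLetter X)), genCount w = n → HNNReducedWord UA UB w →
      WordOver V w → ∃ v', WordOver V v' ∧ v' ∈ MRF φ w := by
  intro n
  induction n using Nat.strong_induction_on with
  | _ n ih =>
    intro w hn hred hov
    by_cases hm : ∀ z, ¬ Rsa φ w z
    · exact ⟨w, hov, Or.inl Relation.ReflTransGen.refl, hred, hm⟩
    · push_neg at hm
      obtain ⟨z, hz⟩ := hm
      obtain ⟨m, w', v', hw'red, hv'red, hsimww', hcan, -⟩ := hz
      obtain ⟨n0, pre, post, u, n', hmlen, hw'eq, hv'cases⟩ := hcan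
      obtain ⟨v₀, hv₀def⟩ : ∃ v₀, v₀ = delAux pre.length 0 w := ⟨_, rfl⟩
      have hsimdel : Sim φ v₀ (delAux pre.length 0 w') := by
        rw [hv₀def]; exact sim_delAux hsimww' pre.length
      have hdel : delAux pre.length 0 w' =
          tPow n0 ++ (pre.flatMap fun p => HLetter.gen p.1 :: tPow p.2) ++ tPow n'
            ++ (post.flatMap fun p => HLetter.gen p.1 :: tPow p.2) := by
        rw [hw'eq]; exact delAux_blockWord n0 n' pre post u
      have hdelv' : delAux pre.length 0 w' = v' := by
        rcases hv'cases with ⟨rfl, rfl⟩ | ⟨pre', u', nl, rfl, rfl⟩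
        · have heq : w' = ([] : List (HLetter X)) ++ tPow n0 ++
              [HLetter.gen u, HLetter.gen u⁻¹] ++ tPow n'
              ++ (post.flatMap fun p => HLetter.gen p.1 :: tPow p.2) := by
            rw [hw'eq]
            simp [blockWord_eq, List.append_assoc]
          have hsg := reduced_signs (heq ▸ hw'red)
          rw [hdel, blockWord_eq, ← tPow_append hsg]
          simp [List.append_assoc]
        · have heq : w' = (tPow n0 ++ (pre'.flatMap fun p => HLetter.gen p.1 :: tPow p.2)
              ++ [HLetter.gen u']) ++ tPow nl ++ [HLetter.gen u, HLetter.gen u⁻¹] ++ tPow n'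
              ++ (post.flatMap fun p => HLetter.gen p.1 :: tPow p.2) := by
            rw [hw'eq]
            simp [blockWord_eq, List.append_assoc]
          have hsg := reduced_signs (heq ▸ hw'red)
          rw [hdel, blockWord_eq]
          simp only [List.flatMap_append, List.flatMap_cons, List.flatMap_nil]
          rw [← tPow_append hsg]
          simp [List.append_assoc]
      rw [hdelv'] at hsimdel
      have hsim2 : Sim φ v' v₀ := sim_symm hsimdel
      have hredv₀ : HNNReducedWord UA UB v₀ := sim_reduced hsim2 hv'red
      have hovv₀ : WordOver V v₀ := by
        rw [hv₀def]; exact wordOver_delAux hov _ _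
      have hRsaw : Rsa φ w v₀ :=
        ⟨m, w', v', hw'red, hv'red, hsimww',
          ⟨n0, pre, post, u, n', hmlen, hw'eq, hv'cases⟩, hsim2⟩
      have hcnt : genCount v' + 2 = genCount w := by
        have h1 : genCount w = genCount w' := sim_genCount hsimww'
        rw [h1, hw'eq, genCount_blockWord]
        rcases hv'cases with ⟨rfl, rfl⟩ | ⟨pre', u', nl, rfl, rfl⟩ <;> simp <;> omega
      have hcnt2 : genCount v' = genCount v₀ := sim_genCount hsim2
      obtain ⟨v'', hov'', hsucc, hmost⟩ :=
        ih (genCount v₀) (by omega) v₀ rfl hredv₀ hovv₀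
      refine ⟨v'', hov'', ?_, hmost⟩
      rcases hsucc with hsimv | htr
      · exact Or.inr (Relation.TransGen.single (rsa_sim_right hRsaw hsimv))
      · exact Or.inr (Relation.TransGen.head hRsaw htr)

end Aux4

end HnnPaper

open HnnPaper

theorem statement_16
    (X : Type*) [Finite X]
    (UH UA UB : Set (FreeGroup X))
    (hUH : IsFreeBasis UH) (hUAH : UA ⊆ UH) (hUBH : UB ⊆ UH)
    (φ : ↥(Subgroup.closure UA) ≃* ↥(Subgroup.closure UB))
    (hφ : ∀ a : ↥(Subgroup.closure UA), (a : FreeGroup X) ∈ UA ∪ UA⁻¹ ↔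
      ((φ a : ↥(Subgroup.closure UB)) : FreeGroup X) ∈ UB ∪ UB⁻¹)
    (w : List (HLetter X))
    (hwred : HNNReducedWord UA UB w)
    (V : Set (FreeGroup X)) (hV : V ⊆ UH ∪ UH⁻¹) (hw : WordOver V w) :
    ∃ v' : List (HLetter X), WordOver V v' ∧ v' ∈ MRF φ w :=
  main_aux φ V (genCount w) w rfl hwred hw
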